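/- Let X be a u.l.f. metric space with base point x₀, and define X_n^e = {x : 2^{6n+1} ≤ d(x,x₀) ≤ 2^{6n+5}}. Then the sequence (X_n^e) is sparse: the X_n^e are pairwise disjoint finite sets with d(X_n^e, X_m^e) > 2·max{n,m} for all n ≠ m. -/

import Mathlib

private lemma two_m_lt {n m : ℕ} (h : n < m) : (2 * m : ℝ) < 2 ^ (6 * m + 1) - 2 ^ (6 * n + 5) := by
  have hm1 : 1 ≤ m := by omega
  have h1 : (6 * n + 5 : ℕ) ≤ 6 * m - 1 := by omega
  have h2 : ((2:ℝ)) ^ (6 * n + 5) ≤ 2 ^ (6 * m - 1) :=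
    pow_le_pow_right₀ one_le_two h1
  have h3 : (m : ℝ) < 2 ^ m := by
    exact_mod_cast (Nat.lt_two_pow_self (n := m))
  have h4 : ((2:ℝ)) ^ (m + 1) ≤ 2 ^ (6 * m - 1) :=
    pow_le_pow_right₀ one_le_two (by omega)
  have h5 : ((2:ℝ)) ^ (6 * m + 1) = 4 * 2 ^ (6 * m - 1) := by
    rw [show 6 * m + 1 = (6 * m - 1) + 2 by omega, pow_add]
    ring
  have h6 : ((2:ℝ)) ^ (m + 1) = 2 * 2 ^ m := by rw [pow_succ]; ring
  nlinarith [h2, h3, h4, h5, h6]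

private lemma key {X : Type*} [MetricSpace X] (x₀ : X) {n m : ℕ} (h : n < m) {x y : X}
    (hx : dist x x₀ ≤ (2 : ℝ) ^ (6 * n + 5))
    (hy : (2 : ℝ) ^ (6 * m + 1) ≤ dist y x₀) : (2 * m : ℝ) < dist x y := by
  have htri : dist y x₀ ≤ dist y x + dist x x₀ := dist_triangle y x x₀
  have := two_m_lt h
  have hc : dist y x = dist x y := dist_comm y x
  linarith

/-- The annuli `X_n^e = {x : 2^{6n+1} ≤ d(x,x₀) ≤ 2^{6n+5}}` in a u.l.f. metric space
form a sparse sequence: pairwise disjoint finite sets with `d(X_n^e, X_m^e) > 2·max{n,m}`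
for `n ≠ m`. -/
theorem annuli_sparse {X : Type*} [MetricSpace X]
    (hX : ∀ (x : X) (r : ℝ), (Metric.closedBall x r).Finite) (x₀ : X) :
    let Xe : ℕ → Set X := fun n =>
      {x | (2 : ℝ) ^ (6 * n + 1) ≤ dist x x₀ ∧ dist x x₀ ≤ (2 : ℝ) ^ (6 * n + 5)}
    (∀ n, (Xe n).Finite) ∧
    (Pairwise (Function.onFun Disjoint Xe)) ∧
    (∀ n m : ℕ, n ≠ m → ∀ x ∈ Xe n, ∀ y ∈ Xe m, (2 * max n m : ℝ) < dist x y) := by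
  intro Xe
  refine ⟨?_, ?_, ?_⟩
  · intro n
    exact (hX x₀ ((2:ℝ) ^ (6 * n + 5))).subset (fun x hx => hx.2)
  · intro n m hnm
    rw [Function.onFun, Set.disjoint_left]
    rintro x ⟨h1, h2⟩ ⟨h3, h4⟩
    rcases hnm.lt_or_gt with h | h
    · have : (6 * n + 5 : ℕ) < 6 * m + 1 := by omega
      have := pow_lt_pow_right₀ (one_lt_two (α := ℝ)) this
      linarith
    · have : (6 * m + 5 : ℕ) < 6 * n + 1 := by omega
      have := pow_lt_pow_right₀ (one_lt_two (α := ℝ)) this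
      linarith
  · intro n m hnm x hx y hy
    rcases hnm.lt_or_gt with h | h
    · rw [max_eq_right h.le]
      exact key x₀ h hx.2 hy.1
    · rw [max_eq_left h.le, dist_comm]
      exact key x₀ h hy.2 hx.1
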